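/- Let L be an n×n real matrix whose off-diagonal entries are all nonpositive and whose row sums are all zero (i.e., L *ᵥ 1 = 0, so L is the Laplacian matrix of a weighted directed graph). Then for every nonzero real number ω, the complex matrix iω·I + L (with L cast to ℂ entrywise) is invertible. -/

import Mathlib

open Matrix

theorem directed_laplacian_shifted_invertible (n : ℕ) (L : Matrix (Fin n) (Fin n) ℝ)
    (hoff : ∀ i j, i ≠ j → L i j ≤ 0)
    (hrow : L *ᵥ (fun _ => (1 : ℝ)) = 0) :
    ∀ ω : ℝ, ω ≠ 0 →
      IsUnit ((Complex.I * ω) • (1 : Matrix (Fin n) (Fin n) ℂ) + L.map Complex.ofReal) := by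
  intro ω hω
  set M : Matrix (Fin n) (Fin n) ℂ :=
    (Complex.I * ω) • (1 : Matrix (Fin n) (Fin n) ℂ) + L.map Complex.ofReal with hM
  rw [Matrix.isUnit_iff_isUnit_det, isUnit_iff_ne_zero]
  apply det_ne_zero_of_sum_row_lt_diag
  intro k
  have hrowk : ∑ j, L k j = 0 := by
    have := congrFun hrow k
    simpa [Matrix.mulVec, dotProduct] using this
  have hdiag : L k k = ∑ j ∈ Finset.univ.erase k, (- L k j) := by
    rw [Finset.sum_neg_distrib]
    have := Finset.sum_erase_eq_sub (f := fun j => L k j) (Finset.mem_univ k)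
    rw [this, hrowk]
    ring
  have hLkk : 0 ≤ L k k := by
    rw [hdiag]
    exact Finset.sum_nonneg fun j hj => by
      have := hoff k j (Ne.symm (Finset.ne_of_mem_erase hj))
      linarith
  have hoffnorm : ∀ j ∈ Finset.univ.erase k, ‖M k j‖ = - L k j := by
    intro j hj
    have hjk : j ≠ k := Finset.ne_of_mem_erase hj
    have : M k j = (L k j : ℂ) := by
      simp [hM, Matrix.one_apply_ne (Ne.symm hjk), Matrix.map_apply]
    rw [this, Complex.norm_real, Real.norm_eq_abs,
      abs_of_nonpos (hoff k j (Ne.symm hjk))]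
  have hsum : ∑ j ∈ Finset.univ.erase k, ‖M k j‖ = L k k := by
    rw [Finset.sum_congr rfl hoffnorm, hdiag]
  rw [hsum]
  have hMkk : M k k = Complex.mk (L k k) ω := by
    apply Complex.ext <;> simp [hM, Matrix.one_apply_eq, Matrix.map_apply, Complex.ext_iff]
  rw [hMkk]
  have : ‖Complex.mk (L k k) ω‖ = Real.sqrt ((L k k)^2 + ω^2) := by
    rw [Complex.norm_def, Complex.normSq_mk]
    ring_nf
  rw [this]
  have h1 : L k k = Real.sqrt ((L k k)^2) := by
    rw [Real.sqrt_sq hLkk]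
  nth_rewrite 1 [h1]
  apply Real.sqrt_lt_sqrt (sq_nonneg _)
  have := pow_pos (abs_pos.mpr hω) 2
  nlinarith [sq_abs ω]
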